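/- Let n ∈ ℕ, r ≥ 1, K ≥ 0, T > 0, z₀ ∈ ℝ^n. Suppose z : [0,T] → ℝ^n is continuous on [0,T], differentiable on (0,T], z(0) = z₀, and there is g : (0,T] → ℝ^n with ‖g(t) − z₀‖ ≤ K t²/2 for all t ∈ (0,T] such that z′(t) = (r/t)(g(t) − z(t)) for all t ∈ (0,T]. Then for every t ∈ [0,T]: ‖z(t) − z₀‖ ≤ r K t²/(2(r+2)) ≤ r K t²/6, and moreover ‖z′(t)‖ ≤ r K t (1/2 + r/(2(r+2))) for t ∈ (0,T]. -/

import Mathlib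

open Set Real Filter Topology

/-- Growth estimate for the singular averaging ODE
`z′(t) = (r/t)(g(t) − z(t))`: if `r ≥ 1`, `z` is continuous on `[0,T]` and differentiable
on `(0,T]` with `z(0) = z₀`, and `‖g(t) − z₀‖ ≤ K t²/2` on `(0,T]`, then
`‖z(t) − z₀‖ ≤ r K t²/(2(r+2)) ≤ r K t²/6` on `[0,T]` and
`‖z′(t)‖ ≤ r K t (1/2 + r/(2(r+2)))` on `(0,T]`. -/
theorem stmt_9 (n : ℕ) (r K T : ℝ) (hr : 1 ≤ r) (hK : 0 ≤ K) (hT : 0 < T)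
    (z₀ : EuclideanSpace ℝ (Fin n))
    (z g : ℝ → EuclideanSpace ℝ (Fin n))
    (zd : ℝ → EuclideanSpace ℝ (Fin n))
    (hzc : ContinuousOn z (Icc 0 T))
    (hz0 : z 0 = z₀)
    (hzD : ∀ t ∈ Ioc (0 : ℝ) T, HasDerivAt z (zd t) t)
    (hg : ∀ t ∈ Ioc (0 : ℝ) T, ‖g t - z₀‖ ≤ K * t ^ 2 / 2)
    (hode : ∀ t ∈ Ioc (0 : ℝ) T, zd t = (r / t) • (g t - z t)) :
    (∀ t ∈ Icc (0 : ℝ) T,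
      ‖z t - z₀‖ ≤ r * K * t ^ 2 / (2 * (r + 2)) ∧
      r * K * t ^ 2 / (2 * (r + 2)) ≤ r * K * t ^ 2 / 6) ∧
    (∀ t ∈ Ioc (0 : ℝ) T, ‖zd t‖ ≤ r * K * t * (1 / 2 + r / (2 * (r + 2)))) := by
  have hr0 : (0:ℝ) < r := by linarith
  have hr2 : (0:ℝ) < r + 2 := by linarith
  set C : ℝ := r * K / (2 * (r + 2)) with hC
  have hC0 : 0 ≤ C := by positivity
  have hC2 : C * (r + 2) = r * K / 2 := by rw [hC]; field_simp
  set F : ℝ → EuclideanSpace ℝ (Fin n) := fun s => (s ^ r) • (z s - z₀) with hFdef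
  -- derivative of F on (0, T]
  have hFd : ∀ s ∈ Ioc (0:ℝ) T, HasDerivAt F ((r * s ^ (r-1)) • (g s - z₀)) s := by
    rintro s ⟨hs0, hsT⟩
    have h1 : HasDerivAt (fun x : ℝ => x ^ r) (r * s ^ (r-1)) s :=
      Real.hasDerivAt_rpow_const (Or.inl hs0.ne')
    have h2 : HasDerivAt (fun x => z x - z₀) (zd s) s :=
      (hzD s ⟨hs0, hsT⟩).sub_const z₀
    have h3 := h1.smul h2
    have hexp : s ^ r * (r / s) = r * s ^ (r-1) := by
      rw [Real.rpow_sub hs0, Real.rpow_one]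
      field_simp
    refine h3.congr_deriv ?_
    rw [hode s ⟨hs0, hsT⟩, smul_smul, hexp, ← smul_add]
    congr 1
    abel
  have hFd' : ∀ s ∈ Ioc (0:ℝ) T, ‖(r * s ^ (r-1)) • (g s - z₀)‖ ≤ C * (r+2) * s ^ (r+1) := by
    rintro s ⟨hs0, hsT⟩
    have hnn : 0 ≤ r * s ^ (r-1) := by positivity
    rw [norm_smul, Real.norm_eq_abs, abs_of_nonneg hnn]
    calc r * s ^ (r-1) * ‖g s - z₀‖ ≤ r * s ^ (r-1) * (K * s ^ 2 / 2) := by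
          gcongr; exact hg s ⟨hs0, hsT⟩
      _ = C * (r+2) * s ^ (r+1) := by
          rw [show r + 1 = (r-1) + ((2:ℕ):ℝ) by push_cast; ring,
            Real.rpow_add hs0, Real.rpow_natCast, hC2]
          ring
  -- main bound
  have main : ∀ t ∈ Ioc (0:ℝ) T, ‖z t - z₀‖ ≤ C * t ^ 2 := by
    rintro t ⟨ht0, htT⟩
    have step : ∀ ε ∈ Ioo (0:ℝ) t,
        ‖F t‖ ≤ ‖F ε‖ + C * t ^ (r+2) := by
      rintro ε ⟨hε0, hεt⟩
      have hsub : Icc ε t ⊆ Ioc 0 T := fun x hx => ⟨hε0.trans_le hx.1, hx.2.trans htT⟩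
      set B : ℝ → ℝ := fun s => ‖F ε‖ + C * s ^ (r+2) - C * ε ^ (r+2) with hBdef
      have hFt : ‖F t‖ ≤ B t := by
        refine image_norm_le_of_norm_deriv_right_le_deriv_boundary'
          (f' := fun s => (r * s ^ (r-1)) • (g s - z₀))
          (B := B) (B' := fun s => C * (r+2) * s ^ (r+1))
          ?_ ?_ ?_ ?_ ?_ ?_ (right_mem_Icc.2 hεt.le)
        · intro x hx
          exact (hFd x (hsub hx)).continuousAt.continuousWithinAt
        · intro x hx
          exact (hFd x (hsub (Ico_subset_Icc_self hx))).hasDerivWithinAt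
        · simp [hBdef]
        · intro x hx
          have hx0 : (0:ℝ) < x := hε0.trans_le hx.1
          exact (((Real.hasDerivAt_rpow_const (p := r+2) (Or.inl hx0.ne')).const_mul
            C).const_add _).sub_const _ |>.continuousAt.continuousWithinAt
        · intro x hx
          have hx0 : (0:ℝ) < x := hε0.trans_le hx.1
          have h4 := (((Real.hasDerivAt_rpow_const (p := r+2) (Or.inl hx0.ne')).const_mul
            C).const_add (‖F ε‖)).sub_const (C * ε ^ (r+2))
          have he : C * ((r + 2) * x ^ (r + 2 - 1)) = C * (r+2) * x ^ (r+1) := by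
            rw [show r + 2 - 1 = r + 1 by ring]; ring
          rw [he] at h4
          exact h4.hasDerivWithinAt
        · intro x hx
          exact hFd' x (hsub (Ico_subset_Icc_self hx))
      have h5 : C * ε ^ (r+2) ≥ 0 := by positivity
      simp only [hBdef] at hFt
      linarith
    -- take ε → 0⁺
    haveI hne : (𝓝[Ioo (0:ℝ) t] 0).NeBot := by
      refine mem_closure_iff_nhdsWithin_neBot.mp ?_
      rw [closure_Ioo ht0.ne]
      exact ⟨le_refl 0, ht0.le⟩
    have hzt : Tendsto (fun ε => ‖F ε‖) (𝓝[Ioo (0:ℝ) t] 0) (𝓝 0) := by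
      have h1 : Tendsto (fun ε : ℝ => ε ^ r) (𝓝[Ioo (0:ℝ) t] 0) (𝓝 0) := by
        have h := (Real.continuousAt_rpow_const 0 r (Or.inr hr0.le)).continuousWithinAt
          (s := Ioo (0:ℝ) t)
        rw [ContinuousWithinAt, Real.zero_rpow hr0.ne'] at h
        exact h
      have h2 : Tendsto (fun ε => ‖z ε - z₀‖) (𝓝[Ioo (0:ℝ) t] 0) (𝓝 0) := by
        have hz : Tendsto z (𝓝[Ioo (0:ℝ) t] 0) (𝓝 z₀) := by
          have h := (hzc.continuousWithinAt (⟨le_refl 0, hT.le⟩ : (0:ℝ) ∈ Icc 0 T))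
          rw [ContinuousWithinAt, hz0] at h
          exact h.mono_left (nhdsWithin_mono 0
            (fun x (hx : x ∈ Ioo (0:ℝ) t) => ⟨hx.1.le, hx.2.le.trans htT⟩))
        simpa using (hz.sub_const z₀).norm
      have hmul := h1.mul h2
      rw [zero_mul] at hmul
      refine squeeze_zero' (Eventually.of_forall (fun ε => norm_nonneg _)) ?_ hmul
      filter_upwards [self_mem_nhdsWithin] with ε hε
      rw [hFdef]
      simp only [norm_smul, Real.norm_eq_abs,
        abs_of_nonneg (Real.rpow_nonneg hε.1.le r)]
      exact le_refl _
    have hFle : ‖F t‖ ≤ C * t ^ (r+2) := by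
      have hev : ∀ᶠ ε in 𝓝[Ioo (0:ℝ) t] 0, ‖F t‖ - C * t ^ (r+2) ≤ ‖F ε‖ := by
        filter_upwards [self_mem_nhdsWithin] with ε hε
        have := step ε hε
        linarith
      have := ge_of_tendsto hzt hev
      linarith
    -- unfold F
    have htr : (0:ℝ) < t ^ r := Real.rpow_pos_of_pos ht0 r
    have hFt : ‖F t‖ = t ^ r * ‖z t - z₀‖ := by
      rw [hFdef]
      simp [norm_smul, abs_of_nonneg htr.le]
    have hsplit : t ^ (r+2) = t ^ r * t ^ 2 := by
      rw [show r + 2 = r + ((2:ℕ):ℝ) by push_cast; ring,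
        Real.rpow_add ht0, Real.rpow_natCast]
    rw [hFt, hsplit] at hFle
    calc ‖z t - z₀‖ = t ^ r * ‖z t - z₀‖ / t ^ r := by field_simp
      _ ≤ C * (t ^ r * t ^ 2) / t ^ r := by gcongr
      _ = C * t ^ 2 := by field_simp
  constructor
  · rintro t ⟨ht0, htT⟩
    have hb : ‖z t - z₀‖ ≤ r * K * t ^ 2 / (2 * (r + 2)) := by
      rcases eq_or_lt_of_le ht0 with h | h
      · rw [← h]
        simp [hz0]
      · have h6 := main t ⟨h, htT⟩
        rw [hC] at h6
        calc ‖z t - z₀‖ ≤ r * K / (2 * (r + 2)) * t ^ 2 := h6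
          _ = r * K * t ^ 2 / (2 * (r + 2)) := by ring
    refine ⟨hb, div_le_div_of_nonneg_left (by positivity) (by norm_num) (by linarith)⟩
  · rintro t ⟨ht0, htT⟩
    rw [hode t ⟨ht0, htT⟩]
    have hrt : 0 ≤ r / t := by positivity
    rw [norm_smul, Real.norm_eq_abs, abs_of_nonneg hrt]
    have htri : ‖g t - z t‖ ≤ ‖g t - z₀‖ + ‖z t - z₀‖ := by
      have h : g t - z t = (g t - z₀) - (z t - z₀) := by abel
      rw [h]
      exact norm_sub_le _ _
    calc r / t * ‖g t - z t‖ ≤ r / t * (K * t ^ 2 / 2 + C * t ^ 2) := by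
          gcongr
          exact htri.trans (add_le_add (hg t ⟨ht0, htT⟩) (main t ⟨ht0, htT⟩))
      _ = r * K * t * (1 / 2 + r / (2 * (r + 2))) := by
          rw [hC]
          field_simp
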